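/- Let x in R^n and suppose for each i ∈ {1,...,n} we have n filters v ∈ P_i(x) such that the n filters in each S_{P_i} are linearly independent (notation as in the texture model). Define the Gram matrix G^y with entries ⟨ReLU(C(v_a) y), ReLU(C(v_b) y)⟩ over all filter pairs. If y ∈ R^n satisfies G^y = G^x, then y is a cyclic shift of x (i.e., y = Cs^m(x) for some m). -/

import Mathlib

open Matrix

/-- The cyclic shift sending `(x₁, …, xₙ)` to `(xₙ, x₁, …, xₙ₋₁)`. -/
def cycShift {n : ℕ} [NeZero n] (x : Fin n → ℝ) : Fin n → ℝ := fun i => x (i - 1)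

/-- The circulant matrix whose rows are the successive cyclic shifts of `x`. -/
def circMat {n : ℕ} [NeZero n] (x : Fin n → ℝ) : Matrix (Fin n) (Fin n) ℝ :=
  fun k j => x (j - k)

/-- `P i x`: the set of `v` such that exactly the `i`-th entry of `C(x) v` is
positive and all other entries are negative. -/
def Pset {n : ℕ} [NeZero n] (i : Fin n) (x : Fin n → ℝ) : Set (Fin n → ℝ) :=
  {v | 0 < (circMat x).mulVec v i ∧ ∀ j, j ≠ i → (circMat x).mulVec v j < 0}

/-- Entrywise ReLU. -/
def reluVec {n : ℕ} (u : Fin n → ℝ) : Fin n → ℝ := fun j => max (u j) 0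

lemma reluVec_eq_single {n : ℕ} [NeZero n] (w : Fin n → ℝ) (k0 : Fin n) (c : ℝ)
    (hc : 0 < c) (h0 : w k0 = c) (h : ∀ k, k ≠ k0 → w k ≤ 0) :
    reluVec w = Pi.single k0 c := by
  funext k
  by_cases hk : k = k0
  · subst hk; simp [reluVec, h0, Pi.single_eq_same, max_eq_left hc.le]
  · simp [reluVec, Pi.single_eq_of_ne hk, max_eq_right (h k hk)]

lemma circ_rev {n : ℕ} [NeZero n] (v x : Fin n → ℝ) (k : Fin n) :
    (circMat v).mulVec x k = (circMat x).mulVec v (-k) := by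
  unfold circMat Matrix.mulVec dotProduct
  rw [← Equiv.sum_comp (Equiv.addRight k) (fun j => v (j - k) * x j)]
  simp only [Equiv.coe_addRight, add_sub_cancel_right, sub_neg_eq_add]
  exact Finset.sum_congr rfl (fun j _ => mul_comm _ _)

open Fin.NatCast

lemma cycShift_iterate {n : ℕ} [NeZero n] (x : Fin n → ℝ) (m : ℕ) (j : Fin n) :
    cycShift^[m] x j = x (j - (m : Fin n)) := by
  induction m generalizing j with
  | zero => simp
  | succ m ih =>
      rw [Function.iterate_succ_apply', cycShift, ih]
      congr 1
      push_cast
      abel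

theorem stmt18 (n : ℕ) [NeZero n] (x : Fin n → ℝ)
    (v : Fin n → Fin n → (Fin n → ℝ))
    (hv : ∀ i a, v i a ∈ Pset i x)
    (hli : ∀ i, LinearIndependent ℝ (v i))
    (G : (Fin n → ℝ) → (Fin n × Fin n) → (Fin n × Fin n) → ℝ)
    (hG : ∀ z p q, G z p q =
      reluVec ((circMat (v p.1 p.2)).mulVec z) ⬝ᵥ
        reluVec ((circMat (v q.1 q.2)).mulVec z))
    (y : Fin n → ℝ) (hxy : G y = G x) :
    ∃ m : ℕ, y = cycShift^[m] x := by
  classical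
  set d : Fin n → Fin n → ℝ := fun i a => (circMat x).mulVec (v i a) i with hd
  have hdpos : ∀ i a, 0 < d i a := fun i a => (hv i a).1
  -- relu of the x side is a single bump at -i
  have hrx : ∀ i a, reluVec ((circMat (v i a)).mulVec x) = Pi.single (-i) (d i a) := by
    intro i a
    apply reluVec_eq_single _ _ _ (hdpos i a)
    · rw [circ_rev]; simp [hd]
    · intro k hk
      rw [circ_rev]
      refine ((hv i a).2 (-k) ?_).le
      intro h; exact hk (by rw [← h, neg_neg])
  have hGx : ∀ i a j b, G x (i, a) (j, b) = if i = j then d i a * d j b else 0 := by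
    intro i a j b
    rw [hG]
    simp only [hrx]
    rcases eq_or_ne i j with h | h
    · subst h
      simp [dotProduct, Pi.single_apply, ite_and]
    · have : (-i) ≠ (-j) := fun hc => h (neg_injective hc)
      simp [dotProduct, Pi.single_apply, this, ite_and, h, Ne.symm h]
  set u : Fin n → Fin n → Fin n → ℝ := fun i a => reluVec ((circMat (v i a)).mulVec y)
    with hu
  have hunn : ∀ i a k, 0 ≤ u i a k := fun i a k => le_max_right _ _
  have hGy : ∀ i a j b, u i a ⬝ᵥ u j b = if i = j then d i a * d j b else 0 := by
    intro i a j b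
    have h1 := hG y (i, a) (j, b)
    have h2 := congrFun (congrFun hxy (i, a)) (j, b)
    rw [h1] at h2
    rw [hu]
    simp only []
    rw [h2, hGx]
  -- each u i a is nonzero
  have hne : ∀ i a, ∃ k, u i a k ≠ 0 := by
    intro i a
    by_contra h
    push_neg at h
    have h0 : u i a ⬝ᵥ u i a = 0 := by
      simp [dotProduct, h]
    rw [hGy] at h0
    simp only [if_pos rfl] at h0
    exact (mul_pos (hdpos i a) (hdpos i a)).ne' h0
  -- supports of different groups are disjoint
  have hdisj : ∀ i a j b k, i ≠ j → u i a k = 0 ∨ u j b k = 0 := by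
    intro i a j b k hij
    have hsum : u i a ⬝ᵥ u j b = 0 := by rw [hGy, if_neg hij]
    rw [dotProduct] at hsum
    have := (Finset.sum_eq_zero_iff_of_nonneg
      (fun k _ => mul_nonneg (hunn i a k) (hunn j b k))).mp hsum k (Finset.mem_univ k)
    exact mul_eq_zero.mp this
  choose g hg using fun i => hne i 0
  have ginj : Function.Injective g := by
    intro i j hij
    by_contra hij'
    rcases hdisj i 0 j 0 (g i) hij' with h | h
    · exact hg i h
    · rw [hij] at h; exact hg j h
  have gsurj : Function.Surjective g := Finite.surjective_of_injective ginj
  have hsupp : ∀ i a k, u i a k ≠ 0 → k = g i := by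
    intro i a k hk
    obtain ⟨j, hj⟩ := gsurj k
    rcases eq_or_ne i j with h | h
    · rw [h]; exact hj.symm
    · rcases hdisj i a j 0 k h with h' | h'
      · exact absurd h' hk
      · rw [← hj] at h'; exact absurd h' (hg j)
  -- the value at the support point
  have huval : ∀ i a, (circMat (v i a)).mulVec y (g i) = d i a := by
    intro i a
    have h1 : u i a ⬝ᵥ u i a = d i a * d i a := by rw [hGy, if_pos rfl]
    have h2 : ∀ k, k ≠ g i → u i a k = 0 := by
      intro k hk
      by_contra h
      exact hk (hsupp i a k h)
    have h3 : u i a ⬝ᵥ u i a = u i a (g i) * u i a (g i) := by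
      rw [dotProduct]
      rw [Finset.sum_eq_single (g i)]
      · intro k _ hk; rw [h2 k hk]; ring
      · intro h; exact absurd (Finset.mem_univ _) h
    rw [h3] at h1
    have hfac : (u i a (g i) - d i a) * (u i a (g i) + d i a) = 0 := by
      linear_combination h1
    have h4 : u i a (g i) = d i a := by
      rcases mul_eq_zero.mp hfac with h | h
      · linarith
      · have := hunn i a (g i); have := hdpos i a; linarith
    have h5 : max ((circMat (v i a)).mulVec y (g i)) 0 = d i a := h4
    rcases max_cases ((circMat (v i a)).mulVec y (g i)) 0 with ⟨hm, _⟩ | ⟨hm, _⟩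
    · rw [hm] at h5; exact h5
    · rw [hm] at h5; exact absurd h5.symm (hdpos i a).ne'
  -- linear algebra: v 0 is a basis
  have hcard : Fintype.card (Fin n) = Module.finrank ℝ (Fin n → ℝ) := by simp
  let b := basisOfLinearIndependentOfCardEqFinrank (hli 0) hcard
  have hb : ∀ a, b a = v 0 a := fun a =>
    congrFun (coe_basisOfLinearIndependentOfCardEqFinrank (hli 0) hcard) a
  set w : Fin n → ℝ := fun m => y (m + g 0) - x m with hw
  let φ : (Fin n → ℝ) →ₗ[ℝ] ℝ :=
    { toFun := fun z => z ⬝ᵥ w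
      map_add' := fun a b => by simp [add_dotProduct]
      map_smul' := fun c a => by simp [smul_dotProduct] }
  have hkey : ∀ a, v 0 a ⬝ᵥ w = 0 := by
    intro a
    have h1 := huval 0 a
    unfold circMat Matrix.mulVec dotProduct at h1
    rw [← Equiv.sum_comp (Equiv.addRight (g 0)) (fun j => v 0 a (j - g 0) * y j)] at h1
    simp only [Equiv.coe_addRight, add_sub_cancel_right] at h1
    have h2 : d 0 a = ∑ j, v 0 a j * x j := by
      rw [hd]
      unfold circMat Matrix.mulVec dotProduct
      exact Finset.sum_congr rfl (fun j _ => by simp [mul_comm])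
    rw [h2] at h1
    rw [dotProduct, hw]
    simp only [mul_sub]
    rw [Finset.sum_sub_distrib, h1, sub_self]
  have hφ : φ = 0 := by
    apply b.ext
    intro a
    rw [hb a]
    simpa [φ] using hkey a
  have hww : w ⬝ᵥ w = 0 := by
    have := congrFun (congrArg DFunLike.coe hφ) w
    simpa [φ] using this
  have hw0 : w = 0 := dotProduct_self_eq_zero.mp hww
  refine ⟨(g 0 : Fin n).val, ?_⟩
  funext j
  rw [cycShift_iterate, Fin.cast_val_eq_self]
  have := congrFun hw0 (j - g 0)
  rw [hw] at this
  simp only [Pi.zero_apply, sub_eq_zero] at this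
  rw [sub_add_cancel] at this
  exact this
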